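/- Let B be a regular local ring with residue field κ and maximal ideal m, let n be a natural number, and let u ∈ B be a unit such that the polynomial X^n − ū is irreducible over κ, where ū is the image of u in κ (equivalently, [κ(ū^{1/n}) : κ] = n). Then B[X]/(X^n − u) is a regular local ring with residue field κ[X]/(X^n − ū). -/

import Mathlib

open Polynomial Ideal

/-- A regular local ring: a Noetherian local ring whose maximal ideal is generated by
`d` elements, where `d` is the Krull dimension. -/
def IsRegularLocalRingOfPaper (B : Type) [CommRing B] : Prop :=
  IsNoetherianRing B ∧ ∃ (_ : IsLocalRing B) (s : Finset B),
    Ideal.span (s : Set B) = IsLocalRing.maximalIdeal B ∧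
      (s.card : WithBot (WithTop ℕ)) = ringKrullDim B

/-- Lifting a chain of primes along an integral extension. -/
lemma exists_ltSeries_over (R S : Type) [CommRing R] [CommRing S] [Algebra R S]
    [Algebra.IsIntegral R S] (hinj : Function.Injective (algebraMap R S)) :
    ∀ (k : ℕ) (p : LTSeries (PrimeSpectrum R)), p.length = k →
      ∃ q : LTSeries (PrimeSpectrum S), q.length = p.length ∧
        q.last.asIdeal.comap (algebraMap R S) = p.last.asIdeal := by
  intro k
  induction k with
  | zero =>
    intro p hp
    obtain ⟨Q, -, hQp, hQc⟩ := Ideal.exists_ideal_over_prime_of_isIntegral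
      p.last.asIdeal ⊥ (by
        rw [← RingHom.ker_eq_comap_bot (algebraMap R S),
          (RingHom.injective_iff_ker_eq_bot _).mp hinj]
        exact bot_le)
    exact ⟨RelSeries.singleton _ ⟨Q, hQp⟩, by simp [hp], by
      rw [RelSeries.last_singleton]; exact hQc⟩
  | succ k ih =>
    intro p hp
    obtain ⟨q, hlen, hlast⟩ := ih p.eraseLast (by simp [RelSeries.eraseLast_length, hp])
    have hrel : p.eraseLast.last < p.last :=
      p.eraseLast_last_rel_last (by omega)
    have hrel' : p.eraseLast.last.asIdeal < p.last.asIdeal :=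
      (PrimeSpectrum.asIdeal_lt_asIdeal _ _).mpr hrel
    obtain ⟨Q, hQge, hQp, hQc⟩ := Ideal.exists_ideal_over_prime_of_isIntegral
      p.last.asIdeal q.last.asIdeal (by rw [hlast]; exact le_of_lt hrel')
    have hlt : q.last < (⟨Q, hQp⟩ : PrimeSpectrum S) := by
      rw [← PrimeSpectrum.asIdeal_lt_asIdeal]
      refine lt_of_le_of_ne hQge fun h => ?_
      exact (ne_of_lt hrel') (by rw [← hlast, h, hQc])
    refine ⟨q.snoc ⟨Q, hQp⟩ hlt, by simp [hlen, hp], ?_⟩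
    rw [RelSeries.last_snoc]
    exact hQc

/-- An injective integral extension preserves Krull dimension. -/
lemma ringKrullDim_eq_of_isIntegral (R S : Type) [CommRing R] [CommRing S] [Algebra R S]
    [Algebra.IsIntegral R S] (hinj : Function.Injective (algebraMap R S)) :
    ringKrullDim S = ringKrullDim R := by
  apply le_antisymm
  · apply Order.krullDim_le_of_strictMono
      (fun P : PrimeSpectrum S => (⟨P.asIdeal.comap (algebraMap R S), inferInstance⟩ :
        PrimeSpectrum R))
    intro P Q hPQ
    rw [← PrimeSpectrum.asIdeal_lt_asIdeal] at hPQ ⊢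
    obtain ⟨hle, x, hxQ, hxP⟩ := SetLike.lt_iff_le_and_exists.mp hPQ
    exact Ideal.comap_lt_comap_of_integral_mem_sdiff hle ⟨hxQ, hxP⟩
      (Algebra.IsIntegral.isIntegral x)
  · show Order.krullDim (PrimeSpectrum R) ≤ Order.krullDim (PrimeSpectrum S)
    refine iSup_le fun p => ?_
    obtain ⟨q, hlen, -⟩ := exists_ltSeries_over R S hinj p.length p rfl
    rw [← hlen]
    exact Order.LTSeries.length_le_krullDim q

theorem stmt10aux (B : Type) [CommRing B] [IsLocalRing B] (hreg : IsRegularLocalRingOfPaper B)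
    (n : ℕ) (u : B)
    (hirr : Irreducible (Polynomial.X ^ n -
      Polynomial.C (IsLocalRing.residue B u) : Polynomial (IsLocalRing.ResidueField B))) :
    ∃ _ : IsLocalRing (AdjoinRoot (Polynomial.X ^ n - Polynomial.C u : Polynomial B)),
      IsRegularLocalRingOfPaper (AdjoinRoot (Polynomial.X ^ n - Polynomial.C u : Polynomial B)) ∧
      Nonempty
        (IsLocalRing.ResidueField
            (AdjoinRoot (Polynomial.X ^ n - Polynomial.C u : Polynomial B)) ≃+*
          (Polynomial (IsLocalRing.ResidueField B) ⧸
            Ideal.span {Polynomial.X ^ n - Polynomial.C (IsLocalRing.residue B u)})) := by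
  classical
  -- `n ≠ 0`
  have hn : n ≠ 0 := by
    rintro rfl
    rw [pow_zero, ← Polynomial.C_1, ← Polynomial.C_sub] at hirr
    exact Polynomial.not_irreducible_C _ hirr
  set f : Polynomial B := Polynomial.X ^ n - Polynomial.C u with hfdef
  have hmonic : f.Monic := Polynomial.monic_X_pow_sub_C u hn
  set A := AdjoinRoot f with hAdef
  -- `A` is a finite (hence integral) `B`-algebra via a power basis
  set pb : PowerBasis B A := AdjoinRoot.powerBasis' hmonic with hpb
  haveI : Module.Finite B A := pb.finite
  haveI : Algebra.IsIntegral B A := Algebra.IsIntegral.of_finite B A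
  -- the structure map `B → A` is injective
  have hinj : Function.Injective (algebraMap B A) := by
    rw [injective_iff_map_eq_zero]
    intro a ha
    have hdim : 0 < pb.dim := by
      have hd : pb.dim = f.natDegree := rfl
      rw [hd, hfdef, Polynomial.natDegree_X_pow_sub_C]
      omega
    have h1 : (1 : A) = pb.basis ⟨0, hdim⟩ := by
      rw [pb.basis_eq_pow]; simp
    have h2 : (a • pb.basis ⟨0, hdim⟩ : A) = 0 := by
      rw [← h1, ← Algebra.algebraMap_eq_smul_one, ha]
    have h3 : pb.basis.repr (a • pb.basis ⟨0, hdim⟩) ⟨0, hdim⟩ = a := by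
      simp only [map_smul, Module.Basis.repr_self, Finsupp.smul_apply, Finsupp.single_eq_same,
        smul_eq_mul, mul_one]
    rw [h2] at h3
    simpa using h3.symm
  -- the residue field data
  set m : Ideal B := IsLocalRing.maximalIdeal B with hmdef
  set M : Ideal A := m.map (AdjoinRoot.of f) with hMdef
  -- the isomorphism `A ⧸ M ≃+* κ[X] ⧸ (X ^ n - ū)`
  have hfbar : f.map (Ideal.Quotient.mk m) =
      (Polynomial.X ^ n - Polynomial.C (IsLocalRing.residue B u) :
        Polynomial (IsLocalRing.ResidueField B)) := by
    rw [hfdef]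
    rw [Polynomial.map_sub, Polynomial.map_pow, Polynomial.map_X, Polynomial.map_C]
    rfl
  have e : (A ⧸ M) ≃+*
      (Polynomial (IsLocalRing.ResidueField B) ⧸
        Ideal.span {Polynomial.X ^ n - Polynomial.C (IsLocalRing.residue B u)}) :=
    (AdjoinRoot.quotAdjoinRootEquivQuotPolynomialQuot m f).trans
      (@Ideal.quotEquivOfEq _ _ _ _ (by constructor; intro b a ha; rw [mul_comm]; exact Ideal.mul_mem_left _ _ ha) (by constructor; intro b a ha; rw [mul_comm]; exact Ideal.mul_mem_left _ _ ha) (by rw [hfbar]; rfl))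
  -- the target quotient is a field since `X ^ n - ū` is irreducible
  haveI hmax' : (Ideal.span {Polynomial.X ^ n - Polynomial.C (IsLocalRing.residue B u)} :
      Ideal (Polynomial (IsLocalRing.ResidueField B))).IsMaximal :=
    PrincipalIdealRing.isMaximal_of_irreducible hirr
  letI : Field (Polynomial (IsLocalRing.ResidueField B) ⧸
      Ideal.span {Polynomial.X ^ n - Polynomial.C (IsLocalRing.residue B u)}) :=
    Ideal.Quotient.field _
  have hMmax : M.IsMaximal :=
    Ideal.Quotient.maximal_of_isField M (e.toMulEquiv.isField (Field.toIsField _))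
  -- `A` is local with maximal ideal `M`
  have hMeq : M = m.map (algebraMap B A) := by rw [AdjoinRoot.algebraMap_eq]
  haveI hlocA : IsLocalRing A := by
    apply IsLocalRing.of_unique_max_ideal
    refine ⟨M, hMmax, fun I hI => ?_⟩
    have hI' : I.IsMaximal := hI
    have hcomapmax : (I.comap (algebraMap B A)).IsMaximal :=
      @Ideal.isMaximal_comap_of_isIntegral_of_isMaximal B _ A _ _ _ I hI'
    have hcomap : I.comap (algebraMap B A) = m := IsLocalRing.eq_maximalIdeal hcomapmax
    have hle : M ≤ I := by
      rw [hMeq, ← hcomap]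
      exact Ideal.map_comap_le
    exact (hMmax.eq_of_le hI'.ne_top hle).symm
  have hMeq' : M = IsLocalRing.maximalIdeal A := IsLocalRing.eq_maximalIdeal hMmax
  -- Krull dimension
  have hdim : ringKrullDim A = ringKrullDim B :=
    ringKrullDim_eq_of_isIntegral B A hinj
  -- Noetherian
  haveI hnoethB : IsNoetherianRing B := hreg.1
  haveI : IsNoetherianRing (Polynomial B) := inferInstance
  haveI hnoethA : IsNoetherianRing A :=
    isNoetherianRing_of_surjective (Polynomial B) A (Ideal.Quotient.mk _)
      Ideal.Quotient.mk_surjective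
  -- generators of the maximal ideal
  obtain ⟨-, hB', s, hspan, hcard⟩ := hreg
  have hspan' : Ideal.span (s : Set B) = m := hspan
  refine ⟨hlocA, ⟨hnoethA, hlocA, s.image (algebraMap B A), ?_, ?_⟩,
    ⟨(Ideal.quotEquivOfEq hMeq'.symm).trans e⟩⟩
  · rw [Finset.coe_image, ← Ideal.map_span, hspan', ← hMeq, hMeq']
  · rw [Finset.card_image_of_injective s hinj, hcard, hdim]

/-- let `B` be a regular local ring with residue field `κ`, `n` a natural
number and `u ∈ B` a unit such that `X ^ n - ū` is irreducible over `κ`.  Then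
`B[X]/(X ^ n - u)` is a regular local ring with residue field `κ[X]/(X ^ n - ū)`. -/
theorem stmt10 (B : Type) [CommRing B] [IsLocalRing B] (hreg : IsRegularLocalRingOfPaper B)
    (n : ℕ) (u : B) (hu : IsUnit u)
    (hirr : Irreducible (Polynomial.X ^ n -
      Polynomial.C (IsLocalRing.residue B u) : Polynomial (IsLocalRing.ResidueField B))) :
    ∃ _ : IsLocalRing (Polynomial B ⧸ Ideal.span {Polynomial.X ^ n - Polynomial.C u}),
      IsRegularLocalRingOfPaper (Polynomial B ⧸ Ideal.span {Polynomial.X ^ n - Polynomial.C u}) ∧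
      Nonempty
        (IsLocalRing.ResidueField
            (Polynomial B ⧸ Ideal.span {Polynomial.X ^ n - Polynomial.C u}) ≃+*
          (Polynomial (IsLocalRing.ResidueField B) ⧸
            Ideal.span {Polynomial.X ^ n - Polynomial.C (IsLocalRing.residue B u)})) := by
  exact stmt10aux B hreg n u hirr
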